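/- arXiv:1902.04817 — 2 statements merged into one kernel-verified Lean document; each statement's English description precedes it below -/
import Mathlib

section
/- (Lemma 3.2: pp-formulas and weak A-direct products.) Let A be a fixed finite MTL-chain, P a predicate language, I a nonempty set, and (M_i)_{i∈I} a family of A-structures for P. Let φ(x₁,…,xₙ) be a positive-primitive P-formula and let d̄₁,…,d̄ₙ be elements of the cartesian product Π_{i∈I} M_i. Then for every weak A-direct product M of the family (M_i)_{i∈I}: ||φ(d̄₁(i),…,d̄ₙ(i))||_{M_i} = 1 for every i ∈ I if and only if ||φ(d̄₁,…,d̄ₙ)||_M = 1. -/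
noncomputable section
open Classical

universe u

/-- A finite MTL-chain: a finite linearly ordered set with least and greatest
elements, a commutative monoid operation `*` with unit `1 = ⊤` that is monotone
in each argument, and the residuum determined by `a * b ≤ c ↔ a ≤ resid b c`. -/
class MTLChain (A : Type u) extends Fintype A, LinearOrder A, CommMonoid A, BoundedOrder A where
  one_eq_top : (1 : A) = ⊤
  mul_mono : ∀ {a b : A}, a ≤ b → ∀ c : A, c * a ≤ c * b
  resid : A → A → A
  resid_galois : ∀ a b c : A, a * b ≤ c ↔ a ≤ resid b c

noncomputable instance MTLChain.toCompleteLinearOrder (A : Type u) [MTLChain A] :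
    CompleteLinearOrder A :=
  Fintype.toCompleteLinearOrder A

/-- A predicate language: predicate symbols and function symbols, each with
a finite arity.  (Nullary predicates are truth constants, nullary functions
are individual constants.)  Crisp equality `≈` is built into formulas. -/
structure Lang : Type (u + 1) where
  Pred : Type u
  predAr : Pred → ℕ
  Func : Type u
  funcAr : Func → ℕ

variable {A : Type u} [MTLChain A] {L : Lang.{u}}

/-- Terms of a predicate language, with variables indexed by `ℕ`. -/
inductive Term (L : Lang.{u}) : Type u where
  | var : ℕ → Term L
  | func (f : L.Func) (ts : Fin (L.funcAr f) → Term L) : Term L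

/-- Formulas: atomic formulas (predicates applied to terms, and crisp equality),
strong conjunction `&`, weak conjunction `∧`, weak disjunction `∨`,
implication `→`, and the quantifiers. -/
inductive Formula (L : Lang.{u}) : Type u where
  | rel (P : L.Pred) (ts : Fin (L.predAr P) → Term L) : Formula L
  | eq (t₁ t₂ : Term L) : Formula L
  | sconj (φ ψ : Formula L) : Formula L
  | wconj (φ ψ : Formula L) : Formula L
  | wdisj (φ ψ : Formula L) : Formula L
  | impl (φ ψ : Formula L) : Formula L
  | all (x : ℕ) (φ : Formula L) : Formula L
  | ex (x : ℕ) (φ : Formula L) : Formula L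

/-- An `A`-structure for the language `L`: a nonempty domain, an `A`-valued
interpretation of each predicate symbol, and an interpretation of each
function symbol. -/
structure Structure (L : Lang.{u}) (A : Type u) [MTLChain A] : Type (u + 1) where
  Dom : Type u
  [dom_nonempty : Nonempty Dom]
  funMap (f : L.Func) : (Fin (L.funcAr f) → Dom) → Dom
  relMap (P : L.Pred) : (Fin (L.predAr P) → Dom) → A

attribute [instance] Structure.dom_nonempty

/-- Value of a term under an evaluation of the variables. -/
def Term.val (M : Structure L A) (v : ℕ → M.Dom) : Term L → M.Dom
  | .var n => v n
  | .func f ts => M.funMap f fun i => (ts i).val M v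

/-- Truth value of a formula in an `A`-structure under an evaluation of the
variables.  Equality is crisp, `&` is interpreted by `*`, `∧` by minimum,
`∨` by maximum, `→` by the residuum, `∀` by infimum (= minimum) and `∃` by
supremum (= maximum) over the domain. -/
def Formula.val (M : Structure L A) : Formula L → (ℕ → M.Dom) → A
  | .rel P ts, v => M.relMap P fun i => (ts i).val M v
  | .eq t₁ t₂, v => if t₁.val M v = t₂.val M v then 1 else ⊥
  | .sconj φ ψ, v => φ.val M v * ψ.val M v
  | .wconj φ ψ, v => φ.val M v ⊓ ψ.val M v
  | .wdisj φ ψ, v => φ.val M v ⊔ ψ.val M v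
  | .impl φ ψ, v => MTLChain.resid (φ.val M v) (ψ.val M v)
  | .all x φ, v => ⨅ a : M.Dom, φ.val M (Function.update v x a)
  | .ex x φ, v => ⨆ a : M.Dom, φ.val M (Function.update v x a)

/-- Free variables of a term. -/
def Term.fvars : Term L → Set ℕ
  | .var n => {n}
  | .func _ ts => ⋃ i, (ts i).fvars

/-- Free variables of a formula. -/
def Formula.fvars : Formula L → Set ℕ
  | .rel _ ts => ⋃ i, (ts i).fvars
  | .eq t₁ t₂ => t₁.fvars ∪ t₂.fvars
  | .sconj φ ψ => φ.fvars ∪ ψ.fvars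
  | .wconj φ ψ => φ.fvars ∪ ψ.fvars
  | .wdisj φ ψ => φ.fvars ∪ ψ.fvars
  | .impl φ ψ => φ.fvars ∪ ψ.fvars
  | .all x φ => φ.fvars \ {x}
  | .ex x φ => φ.fvars \ {x}

/-- A sentence is a formula with no free variables. -/
def Formula.IsSentence (φ : Formula L) : Prop := φ.fvars = ∅

/-- `φ` is valid in `M` (i.e. `‖φ‖_M = 1`). -/
def Valid (M : Structure L A) (φ : Formula L) : Prop :=
  ∀ v : ℕ → M.Dom, φ.val M v = 1

/-- `M` is an `A`-model of the set of sentences `T`. -/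
def Models (M : Structure L A) (T : Set (Formula L)) : Prop :=
  ∀ φ ∈ T, Valid M φ

/-- Two structures are elementarily equivalent if the same sentences are valid
in both (i.e. they have the same theory). -/
def ElemEquiv (M N : Structure L A) : Prop :=
  ∀ φ : Formula L, φ.IsSentence → (Valid M φ ↔ Valid N φ)

/-- `g : M → N` is a homomorphism of `A`-structures: it commutes with the
interpretation of function symbols, and preserves truth (value `1`) of
atomic predicates. -/
structure IsHom (M N : Structure L A) (g : M.Dom → N.Dom) : Prop where
  map_fun : ∀ (f : L.Func) (d : Fin (L.funcAr f) → M.Dom),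
    g (M.funMap f d) = N.funMap f (g ∘ d)
  map_rel : ∀ (P : L.Pred) (d : Fin (L.predAr P) → M.Dom),
    M.relMap P d = 1 → N.relMap P (g ∘ d) = 1

/-- Atomic formulas. -/
inductive IsAtomicFormula : Formula L → Prop
  | rel (P : L.Pred) (ts : Fin (L.predAr P) → Term L) : IsAtomicFormula (.rel P ts)
  | eq (t₁ t₂ : Term L) : IsAtomicFormula (.eq t₁ t₂)

/-- Quantifier-free formulas built from atomic formulas using only `∧` and `&`. -/
inductive QFConj : Formula L → Prop
  | atom {φ : Formula L} : IsAtomicFormula φ → QFConj φ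
  | sconj {φ ψ : Formula L} : QFConj φ → QFConj ψ → QFConj (.sconj φ ψ)
  | wconj {φ ψ : Formula L} : QFConj φ → QFConj ψ → QFConj (.wconj φ ψ)

/-- Quantifier-free formulas built from atomic formulas using only `∧`. -/
inductive QFWConj : Formula L → Prop
  | atom {φ : Formula L} : IsAtomicFormula φ → QFWConj φ
  | wconj {φ ψ : Formula L} : QFWConj φ → QFWConj ψ → QFWConj (.wconj φ ψ)

/-- Quantifier-free formulas built from atomic formulas using only `&`. -/
inductive QFSConj : Formula L → Prop
  | atom {φ : Formula L} : IsAtomicFormula φ → QFSConj φ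
  | sconj {φ ψ : Formula L} : QFSConj φ → QFSConj ψ → QFSConj (.sconj φ ψ)

/-- Quantifier-free formulas built from atomic formulas using only `∧`, `∨` and `&`. -/
inductive QFPos : Formula L → Prop
  | atom {φ : Formula L} : IsAtomicFormula φ → QFPos φ
  | sconj {φ ψ : Formula L} : QFPos φ → QFPos ψ → QFPos (.sconj φ ψ)
  | wconj {φ ψ : Formula L} : QFPos φ → QFPos ψ → QFPos (.wconj φ ψ)
  | wdisj {φ ψ : Formula L} : QFPos φ → QFPos ψ → QFPos (.wdisj φ ψ)

/-- Positive-primitive (∧&-primitive) formulas: `(∃ x̄) ψ` with `ψ`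
quantifier-free built from atomic formulas using only `∧` and `&`. -/
inductive IsPP : Formula L → Prop
  | base {φ : Formula L} : QFConj φ → IsPP φ
  | ex {φ : Formula L} (x : ℕ) : IsPP φ → IsPP (.ex x φ)

/-- ∧-primitive formulas. -/
inductive IsWPrimitive : Formula L → Prop
  | base {φ : Formula L} : QFWConj φ → IsWPrimitive φ
  | ex {φ : Formula L} (x : ℕ) : IsWPrimitive φ → IsWPrimitive (.ex x φ)

/-- &-primitive formulas. -/
inductive IsSPrimitive : Formula L → Prop
  | base {φ : Formula L} : QFSConj φ → IsSPrimitive φ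
  | ex {φ : Formula L} (x : ℕ) : IsSPrimitive φ → IsSPrimitive (.ex x φ)

/-- Existential positive formulas: `(∃ x̄) ψ` with `ψ` quantifier-free built
from atomic formulas using only `∧`, `∨` and `&`. -/
inductive IsExPos : Formula L → Prop
  | base {φ : Formula L} : QFPos φ → IsExPos φ
  | ex {φ : Formula L} (x : ℕ) : IsExPos φ → IsExPos (.ex x φ)

/-- The `A`-direct product of a nonempty family of `A`-structures:
cartesian product domain, coordinatewise interpretation of function symbols,
and predicates interpreted by the minimum of the coordinatewise values. -/
def dirProd {I : Type u} [Nonempty I] (Ms : I → Structure L A) : Structure L A where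
  Dom := ∀ i, (Ms i).Dom
  funMap f d := fun i => (Ms i).funMap f fun k => d k i
  relMap P d := ⨅ i, (Ms i).relMap P fun k => d k i

/-- The data of a weak `A`-direct product of a family of `A`-structures: an
interpretation of the predicate symbols on the cartesian product taking value
`1` exactly when all the coordinatewise values are `1`. -/
structure WeakProdData {I : Type u} (Ms : I → Structure L A) : Type u where
  relMap (P : L.Pred) : (Fin (L.predAr P) → ∀ i, (Ms i).Dom) → A
  rel_one_iff : ∀ (P : L.Pred) (d : Fin (L.predAr P) → ∀ i, (Ms i).Dom),
    relMap P d = 1 ↔ ∀ i, (Ms i).relMap P (fun k => d k i) = 1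

/-- The weak `A`-direct product structure determined by such data. -/
def WeakProdData.toStructure {I : Type u} [Nonempty I] {Ms : I → Structure L A}
    (W : WeakProdData Ms) : Structure L A where
  Dom := ∀ i, (Ms i).Dom
  funMap f d := fun i => (Ms i).funMap f fun k => d k i
  relMap := W.relMap
lemma MTLChain.mul_eq_one_iff {A : Type u} [MTLChain A] (a b : A) :
    a * b = 1 ↔ a = 1 ∧ b = 1 := by
  constructor
  · intro h
    have hb : b ≤ 1 := by rw [MTLChain.one_eq_top]; exact le_top
    have ha' : a * b ≤ a := by
      have := MTLChain.mul_mono hb a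
      simpa using this
    have ha : a = 1 := le_antisymm (by rw [MTLChain.one_eq_top]; exact le_top)
      (h ▸ ha')
    have hb' : a * b ≤ b := by
      rw [mul_comm]
      have := MTLChain.mul_mono (show a ≤ 1 by rw [MTLChain.one_eq_top]; exact le_top) b
      simpa using this
    exact ⟨ha, le_antisymm (by rw [MTLChain.one_eq_top]; exact le_top) (h ▸ hb')⟩
  · rintro ⟨ha, hb⟩; rw [ha, hb, mul_one]

lemma MTLChain.inf_eq_one_iff {A : Type u} [MTLChain A] (a b : A) :
    a ⊓ b = 1 ↔ a = 1 ∧ b = 1 := by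
  rw [MTLChain.one_eq_top]; simp [inf_eq_top_iff]

lemma term_val_weak {A : Type u} [MTLChain A] {L : Lang.{u}}
    {I : Type u} [Nonempty I] {Ms : I → Structure L A} (W : WeakProdData Ms)
    (v : ℕ → ∀ i, (Ms i).Dom) (t : Term L) (i : I) :
    t.val W.toStructure v i = t.val (Ms i) (fun n => v n i) := by
  induction t with
  | var n => rfl
  | func f ts ih =>
    show (Ms i).funMap f _ = (Ms i).funMap f _
    congr 1
    funext k
    exact ih k

lemma update_coord {A : Type u} [MTLChain A] {L : Lang.{u}}
    {I : Type u} {Ms : I → Structure L A}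
    (v : ℕ → ∀ i, (Ms i).Dom) (x : ℕ) (a : ∀ i, (Ms i).Dom) (i : I) :
    (fun n => Function.update v x a n i) = Function.update (fun n => v n i) x (a i) := by
  funext n
  by_cases h : n = x
  · subst h; simp
  · simp [Function.update_of_ne h]

lemma sup_eq_top_iff_exists {A : Type u} [MTLChain A] {D : Type u} [Nonempty D]
    (f : D → A) : (⨆ d, f d) = (1 : A) ↔ ∃ d, f d = 1 := by
  rw [MTLChain.one_eq_top]
  constructor
  · intro h
    have hfin : (Set.range f).Finite := Set.toFinite _
    have hmem : sSup (Set.range f) ∈ Set.range f :=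
      (Set.range_nonempty f).csSup_mem hfin
    rw [iSup] at h
    rw [h] at hmem
    obtain ⟨d, hd⟩ := hmem
    exact ⟨d, hd⟩
  · rintro ⟨d, hd⟩
    exact le_antisymm le_top (hd ▸ le_iSup f d)

/-- **Lemma 3.2: pp-formulas and weak A-direct products.**  Let `φ` be a
positive-primitive formula and `v` an evaluation in the cartesian product
(sending each `xₖ` to the tuple `d̄ₖ`).  For every weak `A`-direct product `M`
of the family, `‖φ‖_{M_i, v(·)(i)} = 1` for every `i ∈ I` iff `‖φ‖_{M,v} = 1`. -/
theorem pp_weak_dirProd {A : Type u} [MTLChain A] {L : Lang.{u}}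
    {I : Type u} [Nonempty I] (Ms : I → Structure L A) (W : WeakProdData Ms)
    (φ : Formula L) (hφ : IsPP φ) (v : ℕ → ∀ i, (Ms i).Dom) :
    (∀ i, φ.val (Ms i) (fun n => v n i) = 1) ↔ φ.val W.toStructure v = 1 := by
  induction hφ generalizing v with
  | base hqf =>
    induction hqf with
    | atom hat =>
      cases hat with
      | rel P ts =>
        show _ ↔ W.relMap P _ = 1
        refine Iff.trans ?_ (W.rel_one_iff P _).symm
        constructor
        · intro h i
          have := h i
          simpa [Formula.val, term_val_weak W v] using this
        · intro h i
          have := h i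
          simpa [Formula.val, term_val_weak W v] using this
      | eq t₁ t₂ =>
        by_cases htriv : (⊥ : A) = 1
        · simp only [Formula.val]
          have key : ∀ (c : Prop) [Decidable c], (if c then (1 : A) else ⊥) = 1 := by
            intro c _; split_ifs <;> simp [htriv]
          simp [key]
        · simp only [Formula.val]
          have key : ∀ (c : Prop) [Decidable c],
              ((if c then (1 : A) else ⊥) = 1) ↔ c := by
            intro c _; split_ifs with hc <;> simp [hc, htriv]
          rw [key]
          constructor
          · intro h
            funext i
            have := h i
            rw [key] at this
            rw [term_val_weak W v, term_val_weak W v]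
            exact this
          · intro h i
            rw [key]
            have := congrFun h i
            rwa [term_val_weak W v, term_val_weak W v] at this
    | sconj _ _ ih₁ ih₂ =>
      simp only [Formula.val, MTLChain.mul_eq_one_iff, forall_and]
      rw [← ih₁, ← ih₂]
    | wconj _ _ ih₁ ih₂ =>
      simp only [Formula.val, MTLChain.inf_eq_one_iff, forall_and]
      rw [← ih₁, ← ih₂]
  | ex x _ ih =>
    simp only [Formula.val, sup_eq_top_iff_exists]
    constructor
    · intro h
      choose a ha using h
      refine ⟨a, ?_⟩
      refine (ih _).mp ?_
      intro i
      refine (congrArg (fun w => Formula.val (Ms i) _ w = 1) (update_coord v x a i)).mpr ?_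
      exact ha i
    · rintro ⟨a, ha⟩ i
      refine ⟨a i, ?_⟩
      refine (congrArg (fun w => Formula.val (Ms i) _ w = 1) (update_coord v x a i)).mp ?_
      exact (ih _).mpr ha i
end
end

section
/- (Proposition 4.1.) Let A be a fixed finite MTL-chain, P a predicate language, and M and N A-structures for P. Then every positive-primitive P-sentence that is valid in M is also valid in N if and only if there exists an A-structure L for P that is elementarily equivalent to N and a homomorphism g from M to L. -/
noncomputable section
open Classical

universe u

variable {A : Type u} [MTLChain A] {L : Lang.{u}}

section Basic
variable {A : Type u} [MTLChain A] {L : Lang.{u}}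

lemma MTL.mul_eq_one {a b : A} (h : a * b = 1) : a = 1 ∧ b = 1 := by
  have h1 : a * b ≤ a * 1 := MTLChain.mul_mono (by rw [MTLChain.one_eq_top]; exact le_top) a
  have h2 : b * a ≤ b * 1 := MTLChain.mul_mono (by rw [MTLChain.one_eq_top]; exact le_top) b
  rw [mul_one] at h1 h2
  rw [h] at h1; rw [mul_comm, h] at h2
  constructor
  · exact le_antisymm (by rw [MTLChain.one_eq_top]; exact le_top) h1
  · exact le_antisymm (by rw [MTLChain.one_eq_top]; exact le_top) h2

lemma MTL.eq_one_of_one_le {a : A} (h : (1:A) ≤ a) : a = 1 :=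
  le_antisymm (by rw [MTLChain.one_eq_top]; exact le_top) h

lemma MTL.exists_eq_iSup {ι : Sort*} [Nonempty ι] (f : ι → A) : ∃ i, f i = ⨆ j, f j := by
  have hne : (Set.range f).Nonempty := Set.range_nonempty f
  have hfin : (Set.range f).Finite := Set.toFinite _
  have : sSup (Set.range f) ∈ Set.range f := hne.csSup_mem hfin
  obtain ⟨i, hi⟩ := this
  exact ⟨i, by rw [hi, iSup]⟩

lemma MTL.exists_eq_iInf {ι : Sort*} [Nonempty ι] (f : ι → A) : ∃ i, f i = ⨅ j, f j := by
  have hne : (Set.range f).Nonempty := Set.range_nonempty f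
  have hfin : (Set.range f).Finite := Set.toFinite _
  have : sInf (Set.range f) ∈ Set.range f := hne.csInf_mem hfin
  obtain ⟨i, hi⟩ := this
  exact ⟨i, by rw [hi, iInf]⟩

lemma Term.val_congr {M : Structure L A} {v w : ℕ → M.Dom} :
    ∀ {t : Term L}, (∀ n ∈ t.fvars, v n = w n) → t.val M v = t.val M w
  | .var n, h => h n (by simp [Term.fvars])
  | .func f ts, h => by
    simp only [Term.val]
    congr 1
    funext k
    exact Term.val_congr (fun n hn => h n (Set.mem_iUnion.2 ⟨k, hn⟩))

lemma Formula.val_congr {M : Structure L A} :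
    ∀ {φ : Formula L} {v w : ℕ → M.Dom}, (∀ n ∈ φ.fvars, v n = w n) →
      φ.val M v = φ.val M w
  | .rel P ts, v, w, h => by
    simp only [Formula.val]
    congr 1
    funext k
    exact Term.val_congr (fun n hn => h n (Set.mem_iUnion.2 ⟨k, hn⟩))
  | .eq t₁ t₂, v, w, h => by
    simp only [Formula.val]
    rw [Term.val_congr (fun n hn => h n (Or.inl hn)),
      Term.val_congr (fun n hn => h n (Or.inr hn))]
  | .sconj φ ψ, v, w, h => by
    simp only [Formula.val]
    rw [Formula.val_congr (fun n hn => h n (Or.inl hn)),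
      Formula.val_congr (fun n hn => h n (Or.inr hn))]
  | .wconj φ ψ, v, w, h => by
    simp only [Formula.val]
    rw [Formula.val_congr (fun n hn => h n (Or.inl hn)),
      Formula.val_congr (fun n hn => h n (Or.inr hn))]
  | .wdisj φ ψ, v, w, h => by
    simp only [Formula.val]
    rw [Formula.val_congr (fun n hn => h n (Or.inl hn)),
      Formula.val_congr (fun n hn => h n (Or.inr hn))]
  | .impl φ ψ, v, w, h => by
    simp only [Formula.val]
    rw [Formula.val_congr (fun n hn => h n (Or.inl hn)),
      Formula.val_congr (fun n hn => h n (Or.inr hn))]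
  | .all x φ, v, w, h => by
    simp only [Formula.val]
    congr 1
    funext a
    refine Formula.val_congr (fun n hn => ?_)
    rcases eq_or_ne n x with rfl | hne
    · simp [Function.update]
    · simp only [Function.update, dif_neg hne]
      exact h n ⟨hn, hne⟩
  | .ex x φ, v, w, h => by
    simp only [Formula.val]
    congr 1
    funext a
    refine Formula.val_congr (fun n hn => ?_)
    rcases eq_or_ne n x with rfl | hne
    · simp [Function.update]
    · simp only [Function.update, dif_neg hne]
      exact h n ⟨hn, hne⟩

lemma Formula.val_sentence {M : Structure L A} {φ : Formula L} (hs : φ.IsSentence)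
    (v w : ℕ → M.Dom) : φ.val M v = φ.val M w :=
  Formula.val_congr (fun n hn => by rw [Formula.IsSentence] at hs; simp [hs] at hn)

end Basic

section Lim
variable {A : Type u} [MTLChain A] {I : Type u} (U : Ultrafilter I)

lemma exists_lim (h : I → A) : ∃ a : A, {i | h i = a} ∈ U := by
  by_contra hc
  push_neg at hc
  have : ∀ a : A, {i | h i = a}ᶜ ∈ U := fun a =>
    Ultrafilter.compl_mem_iff_notMem.2 (hc a)
  have h2 : (⋂ a : A, {i | h i = a}ᶜ) ∈ U := (Filter.iInter_mem).2 this
  have h3 : (⋂ a : A, {i | h i = a}ᶜ) = ∅ := by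
    ext i
    simp only [Set.mem_iInter, Set.mem_compl_iff, Set.mem_setOf_eq, Set.mem_empty_iff_false,
      iff_false, not_forall, not_not]
    exact ⟨h i, rfl⟩
  rw [h3] at h2
  exact (Ultrafilter.neBot U).ne (Filter.empty_mem_iff_bot.1 h2)

/-- The limit of an `A`-valued function along an ultrafilter. -/
def limU (h : I → A) : A := Classical.choose (exists_lim U h)

lemma limU_spec (h : I → A) : {i | h i = limU U h} ∈ U :=
  Classical.choose_spec (exists_lim U h)

lemma limU_eq_of_mem {h : I → A} {a : A} (ha : {i | h i = a} ∈ U) : limU U h = a := by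
  by_contra hne
  have := (U.toFilter).inter_mem (limU_spec U h) ha
  obtain ⟨i, hi1, hi2⟩ := Ultrafilter.nonempty_of_mem this
  exact hne (hi1 ▸ hi2 ▸ rfl)

lemma limU_const (a : A) : limU U (fun _ => a) = a :=
  limU_eq_of_mem U (by
    have h : {i : I | a = a} = Set.univ := by simp
    rw [h]; exact Filter.univ_mem)

lemma limU_congr {h g : I → A} (he : {i | h i = g i} ∈ U) : limU U h = limU U g := by
  refine limU_eq_of_mem U ?_
  have := (U.toFilter).inter_mem he (limU_spec U g)
  refine Filter.mem_of_superset this ?_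
  rintro i ⟨h1, h2⟩
  simp only [Set.mem_setOf_eq] at *
  rw [h1, h2]

lemma limU_map₂ (op : A → A → A) (h g : I → A) :
    limU U (fun i => op (h i) (g i)) = op (limU U h) (limU U g) := by
  refine limU_eq_of_mem U ?_
  have := (U.toFilter).inter_mem (limU_spec U h) (limU_spec U g)
  refine Filter.mem_of_superset this ?_
  rintro i ⟨h1, h2⟩
  simp only [Set.mem_setOf_eq] at *
  rw [h1, h2]

lemma limU_mono {h g : I → A} (hle : ∀ i, h i ≤ g i) : limU U h ≤ limU U g := by
  have := (U.toFilter).inter_mem (limU_spec U h) (limU_spec U g)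
  obtain ⟨i, hi1, hi2⟩ := Ultrafilter.nonempty_of_mem this
  simp only [Set.mem_setOf_eq] at hi1 hi2
  rw [← hi1, ← hi2]; exact hle i

lemma limU_eq_iff {h : I → A} {a : A} : limU U h = a ↔ {i | h i = a} ∈ U :=
  ⟨fun he => he ▸ limU_spec U h, limU_eq_of_mem U⟩

end Lim

section Ultra
variable {A : Type u} [MTLChain A] {L : Lang.{u}} {I : Type u}

/-- a.e.-equality setoid on the product. -/
def uSetoid (U : Ultrafilter I) (N : Structure L A) : Setoid (I → N.Dom) where
  r f g := {i | f i = g i} ∈ U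
  iseqv := by
    refine ⟨fun f => ?_, fun {f g} h => ?_, fun {f g h} h1 h2 => ?_⟩
    · have : {i | f i = f i} = Set.univ := by simp
      rw [this]; exact Filter.univ_mem
    · refine Filter.mem_of_superset h fun i hi => ?_
      simpa using (hi : f i = g i).symm
    · refine Filter.mem_of_superset ((U : Filter I).inter_mem h1 h2) ?_
      rintro i ⟨e1, e2⟩
      simp only [Set.mem_setOf_eq] at *
      rw [e1, e2]

variable (U : Ultrafilter I) (N : Structure L A)

lemma out_ae (x : I → N.Dom) : {i | (Quotient.mk (uSetoid U N) x).out i = x i} ∈ U := by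
  letI s : Setoid (I → N.Dom) := uSetoid U N
  exact Quotient.exact (Quotient.out_eq (Quotient.mk s x))

lemma outs_ae {n : ℕ} (x : Fin n → I → N.Dom) :
    {i | ∀ k, (Quotient.mk (uSetoid U N) (x k)).out i = x k i} ∈ U := by
  have h : (⋂ k, {i | (Quotient.mk (uSetoid U N) (x k)).out i = x k i}) ∈ U :=
    (Filter.iInter_mem).2 fun k => out_ae U N (x k)
  refine Filter.mem_of_superset h fun i hi => ?_
  simp only [Set.mem_iInter, Set.mem_setOf_eq] at *
  exact hi

/-- The ultrapower structure. -/
def uStruct : Structure L A where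
  Dom := Quotient (uSetoid U N)
  dom_nonempty := ⟨Quotient.mk _ fun _ => Classical.choice N.dom_nonempty⟩
  funMap f q := Quotient.mk _ fun i => N.funMap f fun k => (q k).out i
  relMap P q := limU U fun i => N.relMap P fun k => (q k).out i

lemma uStruct_funMap_mk (f : L.Func) (x : Fin (L.funcAr f) → I → N.Dom) :
    (uStruct U N).funMap f (fun k => Quotient.mk (uSetoid U N) (x k)) =
      Quotient.mk (uSetoid U N) (fun i => N.funMap f fun k => x k i) := by
  refine Quotient.sound ?_
  refine Filter.mem_of_superset (outs_ae U N x) fun i hi => ?_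
  simp only [Set.mem_setOf_eq] at *
  congr 1
  funext k
  exact hi k

lemma uStruct_relMap_mk (P : L.Pred) (x : Fin (L.predAr P) → I → N.Dom) :
    (uStruct U N).relMap P (fun k => Quotient.mk (uSetoid U N) (x k)) =
      limU U (fun i => N.relMap P fun k => x k i) := by
  refine limU_congr U ?_
  refine Filter.mem_of_superset (outs_ae U N x) fun i hi => ?_
  simp only [Set.mem_setOf_eq] at *
  congr 1
  funext k
  exact hi k

lemma los_term (v : ℕ → I → N.Dom) :
    ∀ t : Term L, t.val (uStruct U N) (fun n => Quotient.mk (uSetoid U N) (v n)) =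
      Quotient.mk (uSetoid U N) (fun i => t.val N (fun n => v n i))
  | .var n => rfl
  | .func f ts => by
    simp only [Term.val]
    have h : (fun k => (ts k).val (uStruct U N) (fun n => Quotient.mk (uSetoid U N) (v n))) =
        fun k => Quotient.mk (uSetoid U N) (fun i => (ts k).val N (fun n => v n i)) := by
      funext k; exact los_term v (ts k)
    rw [h, uStruct_funMap_mk]

/-- Łoś's theorem for the ultrapower. -/
lemma los (φ : Formula L) : ∀ v : ℕ → I → N.Dom,
    φ.val (uStruct U N) (fun n => Quotient.mk (uSetoid U N) (v n)) =
      limU U (fun i => φ.val N (fun n => v n i)) := by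
  induction φ with
  | rel P ts =>
    intro v
    simp only [Formula.val]
    have h : (fun k => (ts k).val (uStruct U N) (fun n => Quotient.mk (uSetoid U N) (v n))) =
        fun k => Quotient.mk (uSetoid U N) (fun i => (ts k).val N (fun n => v n i)) := by
      funext k; exact los_term U N v (ts k)
    rw [h, uStruct_relMap_mk]
  | eq t₁ t₂ =>
    intro v
    simp only [Formula.val, los_term U N v t₁, los_term U N v t₂]
    by_cases h : {i | t₁.val N (fun n => v n i) = t₂.val N (fun n => v n i)} ∈ U
    · refine (if_pos (show (Quotient.mk (uSetoid U N) (fun i => t₁.val N (fun n => v n i)) : (uStruct U N).Dom) = Quotient.mk (uSetoid U N) (fun i => t₂.val N (fun n => v n i)) from Quotient.sound h)).trans ?_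
      refine (limU_eq_of_mem U ?_).symm
      refine Filter.mem_of_superset h fun i hi => ?_
      simp only [Set.mem_setOf_eq] at *
      rw [if_pos hi]
    · refine (if_neg (show ¬ ((Quotient.mk (uSetoid U N) (fun i => t₁.val N (fun n => v n i)) : (uStruct U N).Dom) = Quotient.mk (uSetoid U N) (fun i => t₂.val N (fun n => v n i))) from fun he => h (Quotient.exact he))).trans ?_
      refine (limU_eq_of_mem U ?_).symm
      have hc : {i | t₁.val N (fun n => v n i) = t₂.val N (fun n => v n i)}ᶜ ∈ U :=
        Ultrafilter.compl_mem_iff_notMem.2 h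
      refine Filter.mem_of_superset hc fun i hi => ?_
      simp only [Set.mem_compl_iff, Set.mem_setOf_eq] at *
      rw [if_neg hi]
  | sconj φ ψ ihφ ihψ =>
    intro v
    simp only [Formula.val]
    exact (congrArg₂ (· * ·) (ihφ v) (ihψ v)).trans (limU_map₂ U (· * ·) _ _).symm
  | wconj φ ψ ihφ ihψ =>
    intro v
    simp only [Formula.val]
    exact (congrArg₂ (· ⊓ ·) (ihφ v) (ihψ v)).trans (limU_map₂ U (· ⊓ ·) _ _).symm
  | wdisj φ ψ ihφ ihψ =>
    intro v
    simp only [Formula.val]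
    exact (congrArg₂ (· ⊔ ·) (ihφ v) (ihψ v)).trans (limU_map₂ U (· ⊔ ·) _ _).symm
  | impl φ ψ ihφ ihψ =>
    intro v
    simp only [Formula.val]
    exact (congrArg₂ MTLChain.resid (ihφ v) (ihψ v)).trans (limU_map₂ U MTLChain.resid _ _).symm
  | all x φ ih =>
    intro v
    simp only [Formula.val]
    have key : ∀ f : I → N.Dom,
        φ.val (uStruct U N) (Function.update
            (fun n => Quotient.mk (uSetoid U N) (v n)) x (Quotient.mk (uSetoid U N) f)) =
          limU U (fun i => φ.val N (Function.update (fun n => v n i) x (f i))) := by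
      intro f
      have h1 : Function.update (fun n => Quotient.mk (uSetoid U N) (v n)) x
          (Quotient.mk (uSetoid U N) f) =
          fun n => Quotient.mk (uSetoid U N) ((Function.update v x f) n) := by
        funext n
        rcases eq_or_ne n x with rfl | hne
        · simp
        · simp [Function.update, hne]
      refine (congrArg (φ.val (uStruct U N)) h1).trans ((ih (Function.update v x f)).trans ?_)
      congr 1
      funext i
      congr 1
      funext n
      rcases eq_or_ne n x with rfl | hne
      · simp
      · simp [Function.update, hne]
    refine le_antisymm ?_ ?_
    · -- choose pointwise minimizers
      have hw : ∀ i : I, ∃ a : N.Dom, φ.val N (Function.update (fun n => v n i) x a) =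
          ⨅ b : N.Dom, φ.val N (Function.update (fun n => v n i) x b) :=
        fun i => MTL.exists_eq_iInf _
      choose f hf using hw
      calc (⨅ a : (uStruct U N).Dom, φ.val (uStruct U N)
            (Function.update (fun n => Quotient.mk (uSetoid U N) (v n)) x a))
          ≤ φ.val (uStruct U N) (Function.update
              (fun n => Quotient.mk (uSetoid U N) (v n)) x (Quotient.mk (uSetoid U N) f)) :=
            iInf_le _ _
        _ = limU U (fun i => φ.val N (Function.update (fun n => v n i) x (f i))) := key f
        _ = limU U (fun i => ⨅ b : N.Dom, φ.val N (Function.update (fun n => v n i) x b)) := by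
            congr 1; funext i; exact hf i
    · refine le_iInf fun a => ?_
      induction a using Quotient.ind with
      | _ f =>
        rw [key f]
        exact limU_mono U fun i => iInf_le _ (f i)
  | ex x φ ih =>
    intro v
    simp only [Formula.val]
    have key : ∀ f : I → N.Dom,
        φ.val (uStruct U N) (Function.update
            (fun n => Quotient.mk (uSetoid U N) (v n)) x (Quotient.mk (uSetoid U N) f)) =
          limU U (fun i => φ.val N (Function.update (fun n => v n i) x (f i))) := by
      intro f
      have h1 : Function.update (fun n => Quotient.mk (uSetoid U N) (v n)) x
          (Quotient.mk (uSetoid U N) f) =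
          fun n => Quotient.mk (uSetoid U N) ((Function.update v x f) n) := by
        funext n
        rcases eq_or_ne n x with rfl | hne
        · simp
        · simp [Function.update, hne]
      refine (congrArg (φ.val (uStruct U N)) h1).trans ((ih (Function.update v x f)).trans ?_)
      congr 1
      funext i
      congr 1
      funext n
      rcases eq_or_ne n x with rfl | hne
      · simp
      · simp [Function.update, hne]
    refine le_antisymm ?_ ?_
    · refine iSup_le fun a => ?_
      induction a using Quotient.ind with
      | _ f =>
        rw [key f]
        exact limU_mono U fun i => le_iSup (fun b => φ.val N
          (Function.update (fun n => v n i) x b)) (f i)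
    · have hw : ∀ i : I, ∃ a : N.Dom, φ.val N (Function.update (fun n => v n i) x a) =
          ⨆ b : N.Dom, φ.val N (Function.update (fun n => v n i) x b) :=
        fun i => MTL.exists_eq_iSup _
      choose f hf using hw
      calc limU U (fun i => ⨆ b : N.Dom, φ.val N (Function.update (fun n => v n i) x b))
          = limU U (fun i => φ.val N (Function.update (fun n => v n i) x (f i))) := by
            congr 1; funext i; exact (hf i).symm
        _ = φ.val (uStruct U N) (Function.update
              (fun n => Quotient.mk (uSetoid U N) (v n)) x (Quotient.mk (uSetoid U N) f)) :=
            (key f).symm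
        _ ≤ ⨆ a : (uStruct U N).Dom, φ.val (uStruct U N)
              (Function.update (fun n => Quotient.mk (uSetoid U N) (v n)) x a) :=
            le_iSup (fun a => φ.val (uStruct U N)
              (Function.update (fun n => Quotient.mk (uSetoid U N) (v n)) x a)) _

/-- The ultrapower is elementarily equivalent to `N`. -/
lemma uStruct_elemEquiv : ElemEquiv (uStruct U N) N := by
  intro φ hφ
  constructor
  · intro hv v
    have hK := hv (fun n => Quotient.mk (uSetoid U N) (fun _ => v n))
    rw [los U N φ (fun n => fun _ => v n)] at hK
    rw [limU_eq_iff] at hK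
    obtain ⟨i, hi⟩ := Ultrafilter.nonempty_of_mem hK
    rw [Formula.val_sentence hφ v (fun n => v n)]
    exact hi
  · intro hv w
    have h1 : w = fun n => Quotient.mk (uSetoid U N) ((w n).out) := by
      funext n; exact (Quotient.out_eq (w n)).symm
    rw [h1, los U N φ (fun n => (w n).out)]
    refine limU_eq_of_mem U ?_
    have h2 : {i : I | φ.val N (fun n => (w n).out i) = 1} = Set.univ := by
      ext i
      simp only [Set.mem_setOf_eq, Set.mem_univ, iff_true]
      exact hv _
    rw [h2]; exact Filter.univ_mem

end Ultra

section Easy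
variable {A : Type u} [MTLChain A] {L : Lang.{u}}

lemma IsHom.term_val {M K : Structure L A} {g : M.Dom → K.Dom} (hg : IsHom M K g)
    (v : ℕ → M.Dom) : ∀ t : Term L, g (t.val M v) = t.val K (g ∘ v)
  | .var n => rfl
  | .func f ts => by
    simp only [Term.val]
    rw [hg.map_fun]
    congr 1
    funext k
    exact hg.term_val v (ts k)

lemma IsHom.qfconj_val {M K : Structure L A} {g : M.Dom → K.Dom} (hg : IsHom M K g)
    {φ : Formula L} (hφ : QFConj φ) :
    ∀ v : ℕ → M.Dom, φ.val M v = 1 → φ.val K (g ∘ v) = 1 := by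
  induction hφ with
  | atom h =>
    cases h with
    | rel P ts =>
      intro v hv
      simp only [Formula.val] at *
      have h1 : (fun k => (ts k).val K (g ∘ v)) = g ∘ fun k => (ts k).val M v := by
        funext k; exact (hg.term_val v (ts k)).symm
      rw [h1]
      exact hg.map_rel P _ hv
    | eq t₁ t₂ =>
      intro v hv
      simp only [Formula.val] at *
      split at hv
      case isTrue h =>
        rw [if_pos (by rw [← hg.term_val v t₁, ← hg.term_val v t₂, h])]
      case isFalse h =>
        have htriv : ∀ a : A, a = 1 := fun a =>
          le_antisymm (by rw [MTLChain.one_eq_top]; exact le_top) (hv ▸ bot_le)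
        exact htriv _
  | sconj h₁ h₂ ih₁ ih₂ =>
    intro v hv
    simp only [Formula.val] at *
    obtain ⟨e₁, e₂⟩ := MTL.mul_eq_one hv
    rw [ih₁ v e₁, ih₂ v e₂, mul_one]
  | wconj h₁ h₂ ih₁ ih₂ =>
    intro v hv
    simp only [Formula.val] at *
    have e₁ := MTL.eq_one_of_one_le (hv.symm.le.trans inf_le_left)
    have e₂ := MTL.eq_one_of_one_le (hv.symm.le.trans inf_le_right)
    rw [ih₁ v e₁, ih₂ v e₂, inf_idem]

lemma IsHom.pp_val {M K : Structure L A} {g : M.Dom → K.Dom} (hg : IsHom M K g)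
    {φ : Formula L} (hφ : IsPP φ) :
    ∀ v : ℕ → M.Dom, φ.val M v = 1 → φ.val K (g ∘ v) = 1 := by
  induction hφ with
  | base h => exact hg.qfconj_val h
  | ex x hφ ih =>
    intro v hv
    simp only [Formula.val] at *
    obtain ⟨a, ha⟩ := MTL.exists_eq_iSup
      (fun a : M.Dom => Formula.val M _ (Function.update v x a))
    rw [hv] at ha
    have h2 := ih (Function.update v x a) ha
    have h3 : g ∘ Function.update v x a = Function.update (g ∘ v) x (g a) := by
      funext n
      rcases eq_or_ne n x with rfl | hne
      · simp
      · simp [Function.update, hne]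
    rw [h3] at h2
    refine MTL.eq_one_of_one_le ?_
    rw [← h2]
    exact le_iSup (fun b => Formula.val K _ (Function.update (g ∘ v) x b)) (g a)

/-- Easy direction: pp sentences are preserved by homomorphisms. -/
lemma pp_valid_of_hom {M K : Structure L A} {g : M.Dom → K.Dom} (hg : IsHom M K g)
    {φ : Formula L} (hφ : IsPP φ) (hs : φ.IsSentence) (hM : Valid M φ) : Valid K φ := by
  intro v
  obtain ⟨m⟩ := M.dom_nonempty
  have h := hg.pp_val hφ (fun _ => m) (hM (fun _ => m))
  rw [Formula.val_sentence hs v (g ∘ fun _ => m)]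
  exact h

end Easy

section Hard
variable {A : Type u} [MTLChain A] {L : Lang.{u}}

/-- Atomic facts about a structure `M`: either a relation holding of a tuple,
or a function symbol sending a tuple to an element. -/
def AFact (L : Lang.{u}) {A : Type u} [MTLChain A] (M : Structure L A) : Type u :=
  (Σ P : L.Pred, Fin (L.predAr P) → M.Dom) ⊕ (Σ f : L.Func, (Fin (L.funcAr f) → M.Dom) × M.Dom)

variable {M : Structure L A}

def AFact.holds : AFact L M → Prop
  | .inl ⟨P, d⟩ => M.relMap P d = 1
  | .inr ⟨f, d⟩ => M.funMap f d.1 = d.2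

def AFact.elems : AFact L M → Finset M.Dom
  | .inl ⟨_, d⟩ => Finset.univ.image d
  | .inr ⟨_, d⟩ => insert d.2 (Finset.univ.image d.1)

/-- The atomic formula expressing a fact, with elements replaced by variables. -/
def AFact.formula (idx : M.Dom → ℕ) : AFact L M → Formula L
  | .inl ⟨P, d⟩ => .rel P fun k => .var (idx (d k))
  | .inr ⟨f, d⟩ => .eq (.func f fun k => .var (idx (d.1 k))) (.var (idx d.2))

/-- What it means for a map `h : M.Dom → N.Dom` to preserve a fact. -/
def AFact.preserved (N : Structure L A) (h : M.Dom → N.Dom) : AFact L M → Prop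
  | .inl ⟨P, d⟩ => N.relMap P (h ∘ d) = 1
  | .inr ⟨f, d⟩ => N.funMap f (h ∘ d.1) = h d.2

lemma AFact.formula_atomic (idx : M.Dom → ℕ) (x : AFact L M) :
    IsAtomicFormula (x.formula idx) := by
  rcases x with ⟨P, d⟩ | ⟨f, d⟩
  · exact IsAtomicFormula.rel _ _
  · exact IsAtomicFormula.eq _ _

lemma AFact.formula_fvars {idx : M.Dom → ℕ} {c : ℕ} (x : AFact L M)
    (hb : ∀ m ∈ x.elems, idx m < c) : (x.formula idx).fvars ⊆ {k | k < c} := by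
  rcases x with ⟨P, d⟩ | ⟨f, d⟩
  · intro k hk
    simp only [AFact.formula, Formula.fvars, Term.fvars, Set.mem_iUnion] at hk
    obtain ⟨j, hj⟩ := hk
    rw [Set.mem_singleton_iff] at hj
    subst hj
    exact hb _ (by simp [AFact.elems])
  · intro k hk
    simp only [AFact.formula, Formula.fvars, Term.fvars, Set.mem_union, Set.mem_iUnion,
      Set.mem_singleton_iff] at hk
    rcases hk with ⟨j, hj⟩ | hj
    · subst hj
      exact hb _ (by simp [AFact.elems])
    · subst hj
      exact hb _ (by simp [AFact.elems])

/-- Conjunction of the formulas of a list of facts. -/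
def conjOf (idx : M.Dom → ℕ) : List (AFact L M) → Formula L
  | [] => .eq (.var 0) (.var 0)
  | x :: xs => .wconj (x.formula idx) (conjOf idx xs)

lemma conjOf_qfconj (idx : M.Dom → ℕ) : ∀ l : List (AFact L M), QFConj (conjOf idx l)
  | [] => QFConj.atom (IsAtomicFormula.eq _ _)
  | x :: xs => QFConj.wconj (QFConj.atom (x.formula_atomic idx)) (conjOf_qfconj idx xs)

lemma conjOf_fvars {idx : M.Dom → ℕ} {c : ℕ} (hc : 0 < c) :
    ∀ l : List (AFact L M), (∀ x ∈ l, ∀ m ∈ x.elems, idx m < c) →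
      (conjOf idx l).fvars ⊆ {k | k < c}
  | [], _ => by
    intro k hk
    simp only [conjOf, Formula.fvars, Term.fvars, Set.mem_union, Set.mem_singleton_iff] at hk
    rcases hk with rfl | rfl <;> exact hc
  | x :: xs, hb => by
    intro k hk
    simp only [conjOf, Formula.fvars, Set.mem_union] at hk
    rcases hk with hk | hk
    · exact x.formula_fvars (hb x (by simp)) hk
    · exact conjOf_fvars hc xs (fun y hy => hb y (by simp [hy])) hk

lemma conjOf_val_eq_one {K : Structure L A} (idx : M.Dom → ℕ) (u : ℕ → K.Dom) :
    ∀ l : List (AFact L M),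
      ((conjOf idx l).val K u = 1 ↔ ∀ x ∈ l, (x.formula idx).val K u = 1)
  | [] => by simp [conjOf, Formula.val]
  | x :: xs => by
    simp only [conjOf, Formula.val, List.mem_cons]
    constructor
    · intro hv
      have e₁ := MTL.eq_one_of_one_le (hv.symm.le.trans inf_le_left)
      have e₂ := MTL.eq_one_of_one_le (hv.symm.le.trans inf_le_right)
      rintro y (rfl | hy)
      · exact e₁
      · exact (conjOf_val_eq_one idx u xs).1 e₂ y hy
    · intro hall
      rw [hall x (Or.inl rfl), (conjOf_val_eq_one idx u xs).2 (fun y hy => hall y (Or.inr hy)),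
        inf_idem]

/-- Existential closure of the variables `0, …, n-1`. -/
def close : ℕ → Formula L → Formula L
  | 0, φ => φ
  | n + 1, φ => .ex n (close n φ)

lemma close_pp {φ : Formula L} (hφ : QFConj φ) : ∀ n, IsPP (close n φ)
  | 0 => IsPP.base hφ
  | n + 1 => IsPP.ex n (close_pp hφ n)

lemma close_fvars (φ : Formula L) : ∀ n, (close n φ).fvars = φ.fvars \ {k | k < n}
  | 0 => by simp [close]
  | n + 1 => by
    simp only [close, Formula.fvars, close_fvars φ n]
    ext k
    simp only [Set.mem_diff, Set.mem_setOf_eq, Set.mem_singleton_iff]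
    constructor
    · rintro ⟨⟨h1, h2⟩, h3⟩
      exact ⟨h1, by omega⟩
    · rintro ⟨h1, h2⟩
      exact ⟨⟨h1, by omega⟩, by omega⟩

lemma close_sentence {φ : Formula L} {c : ℕ} (hb : φ.fvars ⊆ {k | k < c}) :
    (close c φ).IsSentence := by
  rw [Formula.IsSentence, close_fvars]
  rw [Set.diff_eq_empty]
  exact hb

/-- Overwrite the first `n` values of `v` with `w`. -/
def ow {D : Type u} (v w : ℕ → D) (n : ℕ) : ℕ → D := fun m => if m < n then w m else v m

lemma close_val_ge {K : Structure L A} (φ : Formula L) (w : ℕ → K.Dom) :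
    ∀ n (v : ℕ → K.Dom), φ.val K (ow v w n) ≤ (close n φ).val K v
  | 0, v => by
    have h : ow v w 0 = v := by funext m; simp [ow]
    rw [close, h]
  | n + 1, v => by
    have h1 : ow v w (n + 1) = ow (Function.update v n (w n)) w n := by
      funext m
      rcases lt_trichotomy m n with hm | rfl | hm
      · simp [ow, hm, Nat.lt_succ_of_lt hm]
      · simp [ow, Function.update]
      · have h2 : ¬ m < n + 1 := by omega
        have h3 : ¬ m < n := by omega
        have h4 : m ≠ n := by omega
        simp [ow, h2, h3, Function.update, h4]
    rw [h1]
    calc φ.val K (ow (Function.update v n (w n)) w n)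
        ≤ (close n φ).val K (Function.update v n (w n)) := close_val_ge φ w n _
      _ ≤ _ := le_iSup (fun a => (close n φ).val K (Function.update v n a)) (w n)

lemma close_val_down {K : Structure L A} (φ : Formula L) :
    ∀ n (v : ℕ → K.Dom), (close n φ).val K v = 1 →
      ∃ w : ℕ → K.Dom, φ.val K (ow v w n) = 1
  | 0, v, hv => ⟨fun _ => v 0, by
      have h : ow v (fun _ => v 0) 0 = v := by funext m; simp [ow]
      rw [h]; exact hv⟩
  | n + 1, v, hv => by
    simp only [close, Formula.val] at hv
    obtain ⟨a, ha⟩ := MTL.exists_eq_iSup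
      (fun a : K.Dom => (close n φ).val K (Function.update v n a))
    rw [hv] at ha
    obtain ⟨w, hw⟩ := close_val_down φ n (Function.update v n a) ha
    refine ⟨fun m => if m < n then w m else a, ?_⟩
    have h1 : ow v (fun m => if m < n then w m else a) (n + 1) =
        ow (Function.update v n a) w n := by
      funext m
      rcases lt_trichotomy m n with hm | rfl | hm
      · simp [ow, hm, Nat.lt_succ_of_lt hm]
      · simp [ow, Function.update]
      · have h2 : ¬ m < n + 1 := by omega
        have h3 : ¬ m < n := by omega
        have h4 : m ≠ n := by omega
        simp [ow, h2, h3, Function.update, h4]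
    rw [h1]
    exact hw

end Hard

section Witness
variable {A : Type u} [MTLChain A] {L : Lang.{u}} {M N : Structure L A}

lemma exists_preserving (hnt : (⊥ : A) ≠ 1)
    (hpp : ∀ φ : Formula L, IsPP φ → φ.IsSentence → Valid M φ → Valid N φ)
    (s : Finset (AFact L M)) (hs : ∀ x ∈ s, x.holds) :
    ∃ h : M.Dom → N.Dom, ∀ x ∈ s, x.preserved N h := by
  classical
  set E : Finset M.Dom := s.biUnion AFact.elems with hE
  set c : ℕ := E.card + 1 with hc
  set idx : M.Dom → ℕ := fun m => if h : m ∈ E then (E.equivFin ⟨m, h⟩ : ℕ) else 0 with hidx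
  have hmemE : ∀ x ∈ s, ∀ m ∈ AFact.elems x, m ∈ E :=
    fun x hx m hm => Finset.mem_biUnion.2 ⟨x, hx, hm⟩
  have hidxE : ∀ m (hm : m ∈ E), idx m = (E.equivFin ⟨m, hm⟩ : ℕ) := by
    intro m hm; simp only [hidx, dif_pos hm]
  have hidxlt : ∀ m ∈ E, idx m < E.card := by
    intro m hm; rw [hidxE m hm]; exact (E.equivFin ⟨m, hm⟩).isLt
  have hidxc : ∀ x ∈ s, ∀ m ∈ AFact.elems x, idx m < c := by
    intro x hx m hm
    exact Nat.lt_succ_of_lt (hidxlt m (hmemE x hx m hm))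
  set ψ : Formula L := conjOf idx s.toList with hψ
  set φ : Formula L := close c ψ with hφ
  have hppφ : IsPP φ := close_pp (conjOf_qfconj idx _) c
  have hsent : φ.IsSentence := close_sentence
    (conjOf_fvars (Nat.succ_pos _) s.toList (fun x hx => hidxc x (Finset.mem_toList.1 hx)))
  have hMφ : Valid M φ := by
    intro v
    refine MTL.eq_one_of_one_le ?_
    set w : ℕ → M.Dom := fun k =>
      if h : k < E.card then ((E.equivFin.symm ⟨k, h⟩ : E) : M.Dom) else v 0 with hw
    have hu : ∀ m ∈ E, (ow v w c) (idx m) = m := by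
      intro m hm
      have h1 : idx m < E.card := hidxlt m hm
      have h2 : idx m < c := Nat.lt_succ_of_lt h1
      simp only [ow, if_pos h2, hw, dif_pos h1]
      have h3 : (⟨idx m, h1⟩ : Fin E.card) = E.equivFin ⟨m, hm⟩ := by
        apply Fin.ext; simp [hidxE m hm]
      rw [h3, Equiv.symm_apply_apply]
    have hψval : ψ.val M (ow v w c) = 1 := by
      rw [hψ, conjOf_val_eq_one]
      intro x hx
      have hxs := Finset.mem_toList.1 hx
      have hold := hs x hxs
      rcases x with ⟨P, d⟩ | ⟨f, d⟩
      · simp only [AFact.formula, Formula.val, Term.val]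
        have h4 : (fun k => (ow v w c) (idx (d k))) = d := by
          funext k
          exact hu (d k) (hmemE _ hxs _ (by simp [AFact.elems]))
        rw [h4]; exact hold
      · simp only [AFact.formula, Formula.val, Term.val]
        have h4 : (fun k => (ow v w c) (idx (d.1 k))) = d.1 := by
          funext k
          exact hu (d.1 k) (hmemE _ hxs _ (by simp [AFact.elems]))
        have h5 : (ow v w c) (idx d.2) = d.2 :=
          hu d.2 (hmemE _ hxs _ (by simp [AFact.elems]))
        have hcond : (M.funMap f fun i => ow v w c (idx (d.1 i))) = ow v w c (idx d.2) := by
          rw [h4, h5]; exact hold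
        exact if_pos hcond
    calc (1:A) = ψ.val M (ow v w c) := hψval.symm
      _ ≤ φ.val M v := close_val_ge ψ w c v
  have hNφ : Valid N φ := hpp φ hppφ hsent hMφ
  obtain ⟨n₀⟩ := N.dom_nonempty
  obtain ⟨w, hw⟩ := close_val_down ψ c (fun _ => n₀) (hNφ (fun _ => n₀))
  set u : ℕ → N.Dom := ow (fun _ => n₀) w c with hu
  have hatoms := (conjOf_val_eq_one idx u s.toList).1 hw
  refine ⟨fun m => if h : m ∈ E then u (idx m) else n₀, ?_⟩
  intro x hxs
  have hx := hatoms x (Finset.mem_toList.2 hxs)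
  rcases x with ⟨P, d⟩ | ⟨f, d⟩
  · simp only [AFact.formula, Formula.val, Term.val] at hx
    show N.relMap P _ = 1
    have h4 : ((fun m => if h : m ∈ E then u (idx m) else n₀) ∘ d) =
        fun k => u (idx (d k)) := by
      funext k
      have hk : d k ∈ E := hmemE _ hxs _ (by simp [AFact.elems])
      simp [hk]
    rw [h4]; exact hx
  · simp only [AFact.formula, Formula.val, Term.val] at hx
    show N.funMap f _ = _
    have heq : N.funMap f (fun k => u (idx (d.1 k))) = u (idx d.2) := by
      by_contra hne
      replace hx := (if_neg hne).symm.trans hx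
      exact hnt hx
    have h4 : ((fun m => if h : m ∈ E then u (idx m) else n₀) ∘ d.1) =
        fun k => u (idx (d.1 k)) := by
      funext k
      have hk : d.1 k ∈ E := hmemE _ hxs _ (by simp [AFact.elems])
      simp [hk]
    have h5 : (if h : d.2 ∈ E then u (idx d.2) else n₀) = u (idx d.2) := by
      have hk : d.2 ∈ E := hmemE _ hxs _ (by simp [AFact.elems])
      simp [hk]
    rw [h4]
    exact heq.trans h5.symm

end Witness

section Main
variable {A : Type u} [MTLChain A] {L : Lang.{u}}

/-- Index set: finite sets of facts that hold in `M`. -/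
def Idx (M : Structure L A) : Type u := {s : Finset (AFact L M) // ∀ x ∈ s, x.holds}

instance (M : Structure L A) : Nonempty (Idx M) := ⟨⟨∅, by simp⟩⟩

theorem pp_preservation_iff_hom_into_elemEquiv' {A : Type u} [MTLChain A]
    {L : Lang.{u}} (M N : Structure L A) :
    (∀ φ : Formula L, IsPP φ → φ.IsSentence → Valid M φ → Valid N φ) ↔
      ∃ (K : Structure L A) (g : M.Dom → K.Dom), ElemEquiv K N ∧ IsHom M K g := by
  constructor
  · intro hpp
    by_cases htriv : (⊥ : A) = 1
    · -- trivial chain: every element of A equals 1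
      have hall : ∀ a : A, a = 1 := fun a =>
        le_antisymm (by rw [MTLChain.one_eq_top]; exact le_top) (htriv ▸ bot_le)
      refine ⟨{ Dom := M.Dom, funMap := M.funMap, relMap := fun _ _ => 1 }, id, ?_, ?_⟩
      · intro φ _
        constructor
        · intro _ v; exact hall _
        · intro _ v; exact hall _
      · exact ⟨fun f d => rfl, fun P d _ => rfl⟩
    · -- nontrivial chain: ultrapower construction
      let up : Idx M → Set (Idx M) := fun i => {j | i.1 ⊆ j.1}
      let F : Filter (Idx M) := ⨅ i, Filter.principal (up i)
      have hdir : Directed (· ≥ ·) fun i : Idx M => Filter.principal (up i) := by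
        intro i j
        refine ⟨⟨i.1 ∪ j.1, ?_⟩, ?_, ?_⟩
        · intro x hx
          rcases Finset.mem_union.1 hx with h | h
          · exact i.2 x h
          · exact j.2 x h
        · refine Filter.principal_mono.2 fun k hk => ?_
          exact Finset.union_subset_iff.1 hk |>.1
        · refine Filter.principal_mono.2 fun k hk => ?_
          exact Finset.union_subset_iff.1 hk |>.2
      haveI hFne : F.NeBot := Filter.iInf_neBot_of_directed hdir
        (fun i => Filter.principal_neBot_iff.2 ⟨i, fun x hx => hx⟩)
      obtain ⟨U, hU⟩ := Ultrafilter.exists_le F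
      have hup : ∀ i : Idx M, up i ∈ U :=
        fun i => hU (Filter.mem_iInf_of_mem i (Filter.mem_principal_self _))
      choose h hh using fun i : Idx M => exists_preserving htriv hpp i.1 i.2
      refine ⟨uStruct U N, fun m => Quotient.mk (uSetoid U N) (fun i => h i m),
        uStruct_elemEquiv U N, ?_, ?_⟩
      · -- map_fun
        intro f d
        show _ = (uStruct U N).funMap f
          (fun k => Quotient.mk (uSetoid U N) (fun i => h i (d k)))
        rw [uStruct_funMap_mk]
        refine Quotient.sound ?_
        have hkey : up ⟨{Sum.inr ⟨f, (d, M.funMap f d)⟩}, by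
            intro x hx
            replace hx := Finset.mem_singleton.1 hx
            subst hx
            rfl⟩ ⊆ {j | h j (M.funMap f d) = N.funMap f fun k => h j (d k)} := by
          intro j hj
          have hmem : (Sum.inr ⟨f, (d, M.funMap f d)⟩ : AFact L M) ∈ j.1 :=
            hj (Finset.mem_singleton_self _)
          have := hh j _ hmem
          exact (this : N.funMap f ((h j) ∘ d) = h j (M.funMap f d)).symm
        exact Filter.mem_of_superset (hup _) hkey
      · -- map_rel
        intro P d hv
        show (uStruct U N).relMap P
          (fun k => Quotient.mk (uSetoid U N) (fun i => h i (d k))) = 1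
        rw [uStruct_relMap_mk]
        refine limU_eq_of_mem U ?_
        have hkey : up ⟨{Sum.inl ⟨P, d⟩}, by
            intro x hx
            replace hx := Finset.mem_singleton.1 hx
            subst hx
            exact hv⟩ ⊆ {j | (N.relMap P fun k => h j (d k)) = 1} := by
          intro j hj
          have hmem : (Sum.inl ⟨P, d⟩ : AFact L M) ∈ j.1 := hj (Finset.mem_singleton_self _)
          exact hh j _ hmem
        exact Filter.mem_of_superset (hup _) hkey
  · rintro ⟨K, g, hKN, hg⟩ φ hφ hsent hM
    exact (hKN φ hsent).1 (pp_valid_of_hom hg hφ hsent hM)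

end Main

/-- **Proposition 4.1.**  Every positive-primitive sentence valid in `M` is
also valid in `N` iff there is a structure `K` elementarily equivalent to `N`
and a homomorphism `g` from `M` to `K`. -/
theorem pp_preservation_iff_hom_into_elemEquiv {A : Type u} [MTLChain A]
    {L : Lang.{u}} (M N : Structure L A) :
    (∀ φ : Formula L, IsPP φ → φ.IsSentence → Valid M φ → Valid N φ) ↔
      ∃ (K : Structure L A) (g : M.Dom → K.Dom), ElemEquiv K N ∧ IsHom M K g :=
  pp_preservation_iff_hom_into_elemEquiv' M N
end
end
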